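/- Let C > 0 and a, b ∈ ℝ, and let Q : [0,∞) → ℝ be twice differentiable with Q''(t) + C·Q(t) = C − b for all t ≥ 0, Q(0) = 1 and Q'(0) = a. If a² + 2b < C, then Q(t) > 0 for all t ≥ 0. -/

import Mathlib

open Set

/-- For constant doping profile `C > 0`: if `Q'' + C Q = C - b`, `Q 0 = 1`,
`Q' 0 = a`, and `a² + 2b < C`, then `Q` stays positive for all `t ≥ 0`. -/
theorem constant_doping_Q_positive
    (C a b : ℝ) (hC : 0 < C)
    (Q Q1 : ℝ → ℝ)
    (hQ1 : ∀ t ∈ Ici (0:ℝ), HasDerivWithinAt Q (Q1 t) (Ici 0) t)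
    (hQ2 : ∀ t ∈ Ici (0:ℝ), HasDerivWithinAt Q1 (C - b - C * Q t) (Ici 0) t)
    (hQ0 : Q 0 = 1) (hQ10 : Q1 0 = a)
    (hcrit : a^2 + 2*b < C) :
    ∀ t ∈ Ici (0:ℝ), 0 < Q t := by
  intro t ht
  simp only [mem_Ici] at ht
  set E : ℝ → ℝ := fun s => (Q1 s)^2 * C + (C * Q s - (C - b))^2 with hE
  have hQc : ContinuousOn Q (Ici 0) := fun s hs => (hQ1 s hs).continuousWithinAt
  have hQ1c : ContinuousOn Q1 (Ici 0) := fun s hs => (hQ2 s hs).continuousWithinAt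
  have hcont : ContinuousOn E (Icc 0 t) := by
    apply ContinuousOn.mono _ (Icc_subset_Ici_self)
    exact ((hQ1c.pow 2).mul continuousOn_const).add
      (((continuousOn_const.mul hQc).sub continuousOn_const).pow 2)
  have hderiv : ∀ x ∈ Ico (0:ℝ) t, HasDerivWithinAt E 0 (Ici x) x := by
    intro x hx
    have hx0 : x ∈ Ici (0:ℝ) := hx.1
    have h1 := (hQ1 x hx0).mono (Ici_subset_Ici.2 hx.1)
    have h2 := (hQ2 x hx0).mono (Ici_subset_Ici.2 hx.1)
    have d1 : HasDerivWithinAt (fun s => (Q1 s)^2 * C)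
        (((2:ℕ) * Q1 x ^ 1 * (C - b - C * Q x)) * C) (Ici x) x := (h2.pow 2).mul_const C
    have d2 : HasDerivWithinAt (fun s => (C * Q s - (C - b))^2)
        ((2:ℕ) * (C * Q x - (C - b)) ^ 1 * (C * Q1 x)) (Ici x) x :=
      ((h1.const_mul C).sub_const (C - b)).pow 2
    have := d1.add d2
    refine this.congr_deriv ?_
    push_cast
    ring
  have hconst := constant_of_has_deriv_right_zero hcont hderiv
  have hEt : E t = E 0 := hconst t (right_mem_Icc.2 ht)
  have hE0 : E 0 = a^2 * C + b^2 := by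
    simp only [hE, hQ0, hQ10]
    ring
  have hkey : (C * Q t - (C - b))^2 ≤ a^2 * C + b^2 := by
    have h := hEt.trans hE0
    simp only [hE] at h
    nlinarith [sq_nonneg (Q1 t), hC]
  have hb : b < C := by nlinarith [sq_nonneg a]
  by_contra hneg
  push_neg at hneg
  have h1 : 0 ≤ -(C * Q t) * (C - b) :=
    mul_nonneg (by nlinarith) (by linarith)
  nlinarith [sq_nonneg (C * Q t), mul_pos hC (show (0:ℝ) < C - 2*b - a^2 by linarith)]
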